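/- With c_n(t) defined by c_0(t)=1, c_1(t)=1-2t², c_{n+1}(t)=c_n(t)-t²·c_{n-1}(t), one has the factorization c_{n-1}(t) = ∏_{i=1}^{n} (1 - 2cos((2i-1)π/(2n))·t) for all n ≥ 1. -/

import Mathlib

open Polynomial Real

/-- The polynomials `c_n` with `c_0 = 1`, `c_1 = 1 - 2t²`, `c_{n+1} = c_n - t² c_{n-1}`,
arising as `det(I - t Aᵀ)` for the adjacency matrix of the Dynkin diagram `C_n`. -/
noncomputable def cpoly : ℕ → Polynomial ℝ
  | 0 => 1
  | 1 => 1 - 2 * X ^ 2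
  | (n + 2) => cpoly (n + 1) - X ^ 2 * cpoly n

lemma keyA (θ : ℝ) (h : Real.cos θ ≠ 0) :
    ∀ m : ℕ, (2 * Real.cos θ) ^ (m + 1) * (cpoly m).eval (1 / (2 * Real.cos θ))
      = 2 * Real.cos (((m : ℝ) + 1) * θ)
  | 0 => by simp [cpoly]
  | 1 => by
      have h2 : (2:ℝ) * Real.cos θ ≠ 0 := by simpa using h
      simp only [cpoly, eval_sub, eval_one, eval_mul, eval_ofNat, eval_pow, eval_X]
      rw [show ((1:ℕ):ℝ) + 1 = 2 by norm_num, show (2:ℝ) * θ = θ + θ by ring, Real.cos_add]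
      have hs := Real.sin_sq_add_cos_sq θ
      field_simp
      linear_combination (4 * Real.cos θ ^ 2) * hs
  | (m + 2) => by
      have h2 : (2:ℝ) * Real.cos θ ≠ 0 := by simpa using h
      have ih1 := keyA θ h m
      have ih2 := keyA θ h (m + 1)
      have trig : Real.cos (((m:ℝ) + 2 + 1) * θ)
          = 2 * Real.cos θ * Real.cos (((m:ℝ) + 1 + 1) * θ) - Real.cos (((m:ℝ) + 1) * θ) := by
        have e1 : ((m:ℝ) + 2 + 1) * θ = ((m:ℝ) + 1 + 1) * θ + θ := by ring
        have e2 : ((m:ℝ) + 1) * θ = ((m:ℝ) + 1 + 1) * θ - θ := by ring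
        rw [e1, e2, Real.cos_add, Real.cos_sub]; ring
      have goal : (2 * Real.cos θ) ^ (m + 2 + 1) * (cpoly (m+2)).eval (1 / (2 * Real.cos θ))
          = 2 * Real.cos (((m:ℝ) + 2 + 1) * θ) := by
        rw [show cpoly (m+2) = cpoly (m+1) - X^2 * cpoly m from rfl]
        simp only [eval_sub, eval_mul, eval_pow, eval_X]
        set u := 2 * Real.cos θ with hu
        set e0 := (cpoly m).eval (1/u)
        set e1 := (cpoly (m+1)).eval (1/u)
        have expand : u ^ (m + 2 + 1) * (e1 - (1/u) ^ 2 * e0)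
            = u * (u ^ (m + 1 + 1) * e1) - u ^ (m + 1) * e0 := by
          field_simp
          ring
        rw [expand, ih2, ih1, trig]
        push_cast
        ring
      convert goal using 3
      push_cast
      ring


lemma keyB (n : ℕ) (hn : 1 ≤ n) (z : ℂ) :
    ∏ k ∈ Finset.range (2 * n),
      (z - Complex.exp (Real.pi * Complex.I / (2 * n)) ^ (2 * k + 1)) = z ^ (2 * n) + 1 := by
  have hn0 : (n : ℂ) ≠ 0 := Nat.cast_ne_zero.mpr (by omega)
  set η := Complex.exp (Real.pi * Complex.I / (2 * n)) with hη
  have hζ : IsPrimitiveRoot (η ^ 2) (2 * n) := by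
    have := Complex.isPrimitiveRoot_exp (2 * n) (by omega)
    convert this using 2
    rw [hη, ← Complex.exp_nat_mul]
    norm_num
    ring_nf
  have ha : η ^ (2 * n) = -1 := by
    rw [hη, ← Complex.exp_nat_mul, ← Complex.exp_pi_mul_I]
    congr 1
    field_simp
    norm_num
  have hp := X_pow_sub_C_eq_prod hζ (by omega : 0 < 2 * n) ha
  have := congrArg (eval z) hp
  simp only [eval_sub, eval_add, eval_pow, eval_X, eval_C, eval_prod] at this
  rw [show z ^ (2*n) + 1 = z ^ (2*n) - (-1) by ring, this]
  apply Finset.prod_congr rfl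
  intro k _
  rw [← pow_mul]
  ring

lemma exp_add_inv (a : ℝ) :
    Complex.exp (a * Complex.I) + (Complex.exp (a * Complex.I))⁻¹ = 2 * (Real.cos a : ℂ) := by
  rw [← Complex.exp_neg, Complex.ofReal_cos, Complex.two_cos, neg_mul]

lemma keyC (n : ℕ) (hn : 1 ≤ n) (θ : ℝ) :
    (2:ℝ) ^ n * ∏ k ∈ Finset.range n,
        (Real.cos θ - Real.cos ((2 * k + 1) * Real.pi / (2 * n)))
      = 2 * Real.cos (n * θ) := by
  have hn0 : (n : ℂ) ≠ 0 := Nat.cast_ne_zero.mpr (by omega)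
  set z := Complex.exp (θ * Complex.I) with hz
  have hzne : z ≠ 0 := Complex.exp_ne_zero _
  set η := Complex.exp (Real.pi * Complex.I / (2 * n)) with hη
  have hηpow : ∀ m : ℕ, η ^ m = Complex.exp ((((m : ℝ) * Real.pi / (2 * n) : ℝ)) * Complex.I) := by
    intro m
    rw [hη, ← Complex.exp_nat_mul]
    congr 1
    push_cast
    ring
  have hone : η ^ (4 * n) = 1 := by
    rw [hηpow]
    rw [show (((4 * n : ℕ) : ℝ) * Real.pi / (2 * n) : ℝ) = 2 * Real.pi by
      push_cast; field_simp [show (n:ℝ) ≠ 0 from Nat.cast_ne_zero.mpr (by omega)]; ring]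
    simpa using Complex.exp_int_mul_two_pi_mul_I 1
  have hFG : ∀ k : ℕ, (z - η ^ (2 * k + 1)) * (z - (η ^ (2 * k + 1))⁻¹)
      = 2 * z * ((Real.cos θ : ℂ) - (Real.cos ((((2 * k + 1 : ℕ) : ℝ) * Real.pi / (2 * n) : ℝ)) : ℂ)) := by
    intro k
    have hw := hηpow (2 * k + 1)
    have hwne : η ^ (2 * k + 1) ≠ 0 := by rw [hw]; exact Complex.exp_ne_zero _
    have hsum : η ^ (2 * k + 1) + (η ^ (2 * k + 1))⁻¹
        = 2 * ((Real.cos ((((2 * k + 1 : ℕ) : ℝ) * Real.pi / (2 * n) : ℝ))) : ℂ) := by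
      rw [hw]; exact exp_add_inv _
    have hzsum : z + z⁻¹ = 2 * (Real.cos θ : ℂ) := by
      rw [hz]; exact exp_add_inv θ
    have e1 : (z - η ^ (2*k+1)) * (z - (η ^ (2*k+1))⁻¹)
        = z^2 + 1 - (η ^ (2*k+1) + (η ^ (2*k+1))⁻¹) * z := by
      field_simp
      ring
    have e2 : z ^ 2 + 1 = (z + z⁻¹) * z := by field_simp
    rw [e1, hsum, e2, hzsum]
    ring
  have h2 : ∏ k ∈ Finset.range n, (z - η ^ (2 * (n + k) + 1))
      = ∏ k ∈ Finset.range n, (z - (η ^ (2 * k + 1))⁻¹) := by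
    rw [← Finset.prod_range_reflect (fun j => z - (η ^ (2 * j + 1))⁻¹) n]
    apply Finset.prod_congr rfl
    intro k hk
    rw [Finset.mem_range] at hk
    congr 1
    have hinv : η ^ (2 * (n + k) + 1) * η ^ (2 * (n - 1 - k) + 1) = 1 := by
      rw [← pow_add, show 2 * (n + k) + 1 + (2 * (n - 1 - k) + 1) = 4 * n by omega, hone]
    exact eq_inv_of_mul_eq_one_right (mul_comm (η ^ (2 * (n + k) + 1)) _ ▸ hinv)
  have hpair : ∏ k ∈ Finset.range (2 * n), (z - η ^ (2 * k + 1))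
      = ∏ k ∈ Finset.range n, ((z - η ^ (2 * k + 1)) * (z - (η ^ (2 * k + 1))⁻¹)) := by
    rw [two_mul, Finset.prod_range_add, Finset.prod_mul_distrib]
    congr 1
  have hprod0 : ∏ k ∈ Finset.range n, (2 * z *
        ((Real.cos θ : ℂ) - (Real.cos ((((2 * k + 1 : ℕ) : ℝ) * Real.pi / (2 * n) : ℝ)) : ℂ)))
      = z ^ (2 * n) + 1 := by
    rw [← keyB n hn z, hpair]
    exact Finset.prod_congr rfl fun k _ => (hFG k).symm
  have hprod : (2 * z) ^ n * ∏ k ∈ Finset.range n,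
        ((Real.cos θ : ℂ) - (Real.cos ((((2 * k + 1 : ℕ) : ℝ) * Real.pi / (2 * n) : ℝ)) : ℂ))
      = z ^ (2 * n) + 1 := by
    rw [← hprod0, Finset.prod_mul_distrib, Finset.prod_const, Finset.card_range]
  have hz2n : z ^ (2 * n) + 1 = z ^ n * (2 * ((Real.cos (((n : ℝ) * θ : ℝ))) : ℂ)) := by
    have h1 : z ^ n = Complex.exp ((((n:ℝ) * θ : ℝ)) * Complex.I) := by
      rw [hz, ← Complex.exp_nat_mul]; congr 1; push_cast; ring
    have h3 : z ^ n + (z ^ n)⁻¹ = 2 * ((Real.cos (((n : ℝ) * θ : ℝ))) : ℂ) := by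
      rw [h1]; exact exp_add_inv _
    have hzn : z ^ n ≠ 0 := pow_ne_zero _ hzne
    rw [← h3, two_mul, pow_add]
    field_simp
  rw [hz2n, mul_pow] at hprod
  have hzn : z ^ n ≠ 0 := pow_ne_zero _ hzne
  have hcancel : (2:ℂ) ^ n * ∏ k ∈ Finset.range n,
        ((Real.cos θ : ℂ) - (Real.cos ((((2 * k + 1 : ℕ) : ℝ) * Real.pi / (2 * n) : ℝ)) : ℂ))
      = 2 * ((Real.cos (((n : ℝ) * θ : ℝ))) : ℂ) := by
    apply mul_left_cancel₀ hzn
    linear_combination hprod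
  have hre : (((2:ℝ) ^ n * ∏ k ∈ Finset.range n,
        (Real.cos θ - Real.cos ((2 * k + 1) * Real.pi / (2 * n))) : ℝ) : ℂ)
      = ((2 * Real.cos (n * θ) : ℝ) : ℂ) := by
    push_cast
    push_cast at hcancel
    convert hcancel using 3
  exact_mod_cast hre

lemma factor_eq (θ : ℝ) (h : Real.cos θ ≠ 0) (a : ℝ) :
    1 - 2 * Real.cos a * (1 / (2 * Real.cos θ)) = (Real.cos θ - Real.cos a) / Real.cos θ := by
  field_simp

/-- `c_{n-1}(t) = ∏_{i=1}^n (1 - 2 cos((2i-1)π/(2n)) t)` for all `n ≥ 1`. -/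
theorem cpoly_eq_prod (n : ℕ) (hn : 1 ≤ n) (t : ℝ) :
    (cpoly (n - 1)).eval t =
      ∏ i ∈ Finset.Icc 1 n, (1 - 2 * Real.cos ((2 * i - 1) * Real.pi / (2 * n)) * t) := by
  set q : Polynomial ℝ :=
    ∏ i ∈ Finset.Icc 1 n, (1 - C (2 * Real.cos ((2 * (i:ℝ) - 1) * Real.pi / (2 * n))) * X) with hq
  have hqeval : ∀ x : ℝ, q.eval x =
      ∏ i ∈ Finset.Icc 1 n, (1 - 2 * Real.cos ((2 * (i:ℝ) - 1) * Real.pi / (2 * n)) * x) := by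
    intro x
    rw [hq, eval_prod]
    exact Finset.prod_congr rfl fun i _ => by simp
  have hmain : cpoly (n - 1) = q := by
    apply Polynomial.eq_of_infinite_eval_eq
    apply Set.Infinite.mono (s := Set.Ioo (1/2:ℝ) 1) ?_ (Set.Ioo_infinite (by norm_num))
    intro x hx
    obtain ⟨hx1, hx2⟩ := hx
    have hx0 : (0:ℝ) < x := by linarith
    have hc0 : (0:ℝ) < 1 / (2 * x) := by positivity
    have hc1 : 1 / (2 * x) < 1 := by
      rw [div_lt_one (by positivity)]; linarith
    set θ := Real.arccos (1 / (2 * x)) with hθ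
    have hcos : Real.cos θ = 1 / (2 * x) :=
      Real.cos_arccos (by linarith) (le_of_lt hc1)
    have hcne : Real.cos θ ≠ 0 := by rw [hcos]; positivity
    have hxeq : x = 1 / (2 * Real.cos θ) := by
      rw [hcos]; field_simp
    have hA := keyA θ hcne (n - 1)
    rw [Nat.sub_add_cancel hn, Nat.cast_sub hn] at hA
    have hA' : (2 * Real.cos θ) ^ n * (cpoly (n-1)).eval x = 2 * Real.cos ((n:ℝ) * θ) := by
      rw [hxeq, hA]
      norm_num
    have hC := keyC n hn θ
    -- compute eval of q
    have hqx : q.eval x = (2 * Real.cos ((n:ℝ) * θ)) / (2 * Real.cos θ) ^ n := by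
      rw [hqeval x]
      have hconv : ∏ i ∈ Finset.Icc 1 n, (1 - 2 * Real.cos ((2 * (i:ℝ) - 1) * Real.pi / (2 * n)) * x)
          = ∏ k ∈ Finset.range n, (1 - 2 * Real.cos ((2 * (k:ℝ) + 1) * Real.pi / (2 * n)) * x) := by
        rw [← Finset.Ico_add_one_right_eq_Icc, Finset.prod_Ico_eq_prod_range]
        apply Finset.prod_congr rfl
        intro k _
        congr 2
        push_cast
        ring
      rw [hconv]
      have hfac : ∀ k : ℕ, 1 - 2 * Real.cos ((2 * (k:ℝ) + 1) * Real.pi / (2 * n)) * x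
          = (Real.cos θ - Real.cos ((2 * (k:ℝ) + 1) * Real.pi / (2 * n))) / Real.cos θ := by
        intro k
        rw [hxeq]
        exact factor_eq θ hcne _
      rw [Finset.prod_congr rfl fun k _ => hfac k, Finset.prod_div_distrib,
        Finset.prod_const, Finset.card_range]
      have hP : ∏ k ∈ Finset.range n, (Real.cos θ - Real.cos ((2 * (k:ℝ) + 1) * Real.pi / (2 * n)))
          = 2 * Real.cos ((n:ℝ) * θ) / 2 ^ n := by
        rw [eq_div_iff (by positivity : (2:ℝ)^n ≠ 0), ← hC]
        ring
      rw [hP, mul_pow]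
      have hcn : Real.cos θ ^ n ≠ 0 := pow_ne_zero _ hcne
      field_simp
    have : (cpoly (n-1)).eval x = (2 * Real.cos ((n:ℝ) * θ)) / (2 * Real.cos θ) ^ n := by
      rw [← hA']
      have h2c : ((2 * Real.cos θ) ^ n : ℝ) ≠ 0 := pow_ne_zero _ (by simpa using hcne)
      field_simp
    show (cpoly (n-1)).eval x = q.eval x
    rw [this, hqx]
  rw [hmain, hqeval t]
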